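/- Fix real numbers T1 < T2, an integer k ≥ 1, and a vector μ ∈ ℝ^k with T1 = μ_0 < μ_1 < ⋯ < μ_k < μ_{k+1} = T2. Then for every s ∈ S_k and every a ∈ [0,1], D_c(s | k, μ) ≤ D_c(μ + a(s − μ) | k, μ), where μ + a(s − μ) ∈ S_k; i.e., the general Dirichlet depth is monotone relative to its deepest point μ. -/

import Mathlib

open MeasureTheory Filter Set

/-- Extended event sequence: `extSeq T1 T2 k s i` is `T1` for `i = 0`,
`s_(i)` for `1 ≤ i ≤ k` and `T2` for `i > k` (conventions `s_0 = T1`, `s_{k+1} = T2`). -/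
noncomputable def extSeq (T1 T2 : ℝ) (k : ℕ) (s : Fin k → ℝ) : ℕ → ℝ :=
  fun i => if h0 : i = 0 then T1 else if h : i ≤ k then s ⟨i - 1, by omega⟩ else T2

/-- The set of point-process realizations with `k` events on `[T1, T2]`:
ordered `k`-tuples `T1 ≤ s_1 ≤ ⋯ ≤ s_k ≤ T2`. -/
def Sk (T1 T2 : ℝ) (k : ℕ) : Set (Fin k → ℝ) :=
  {s | Monotone s ∧ (∀ i, T1 ≤ s i) ∧ (∀ i, s i ≤ T2)}

/-- The Dirichlet depth for a homogeneous Poisson process conditioned on `k` events. -/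
noncomputable def DcHPP (T1 T2 : ℝ) (k : ℕ) (s : Fin k → ℝ) : ℝ :=
  ((k : ℝ) + 1) * ∏ i ∈ Finset.range (k + 1),
    ((extSeq T1 T2 k s (i + 1) - extSeq T1 T2 k s i) / (T2 - T1)) ^ ((1 : ℝ) / ((k : ℝ) + 1))

/-- The general Dirichlet depth relative to a conditional mean vector `μ`. -/
noncomputable def DcGen (T1 T2 : ℝ) (k : ℕ) (μ : Fin k → ℝ) (s : Fin k → ℝ) : ℝ :=
  ∏ i ∈ Finset.range (k + 1),
    ((extSeq T1 T2 k s (i + 1) - extSeq T1 T2 k s i) /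
        (extSeq T1 T2 k μ (i + 1) - extSeq T1 T2 k μ i)) ^
      ((extSeq T1 T2 k μ (i + 1) - extSeq T1 T2 k μ i) / (T2 - T1))

/-- The time-rescaling-based Dirichlet depth relative to a cumulative intensity `Λ`. -/
noncomputable def DcTS (T1 T2 : ℝ) (k : ℕ) (Λ : ℝ → ℝ) (s : Fin k → ℝ) : ℝ :=
  ((k : ℝ) + 1) * ∏ i ∈ Finset.range (k + 1),
    ((Λ (extSeq T1 T2 k s (i + 1)) - Λ (extSeq T1 T2 k s i)) / Λ T2) ^ ((1 : ℝ) / ((k : ℝ) + 1))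

-- extSeq at a convex combination
lemma extSeq_affine (T1 T2 : ℝ) (k : ℕ) (μ s : Fin k → ℝ) (a : ℝ) (i : ℕ) :
    extSeq T1 T2 k (fun j => μ j + a * (s j - μ j)) i
      = extSeq T1 T2 k μ i + a * (extSeq T1 T2 k s i - extSeq T1 T2 k μ i) := by
  unfold extSeq
  split_ifs <;> ring

lemma extSeq_step (T1 T2 : ℝ) (h : T1 ≤ T2) (k : ℕ) (s : Fin k → ℝ)
    (hs : s ∈ Sk T1 T2 k) (i : ℕ) :
    extSeq T1 T2 k s i ≤ extSeq T1 T2 k s (i + 1) := by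
  obtain ⟨hmono, hl, hu⟩ := hs
  unfold extSeq
  split_ifs with h0 h1 h2 h3 h4 <;> first
    | omega
    | exact le_refl _
    | exact h
    | apply hl
    | apply hu
    | exact False.elim (by assumption)
    | exact hmono (by rw [Fin.mk_le_mk]; omega)

lemma extSeq_zero (T1 T2 : ℝ) (k : ℕ) (s : Fin k → ℝ) : extSeq T1 T2 k s 0 = T1 := by
  simp [extSeq]

lemma extSeq_last (T1 T2 : ℝ) (k : ℕ) (s : Fin k → ℝ) : extSeq T1 T2 k s (k + 1) = T2 := by
  simp [extSeq]

lemma extSeq_val (T1 T2 : ℝ) (k : ℕ) (s : Fin k → ℝ) (i : Fin k) :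
    extSeq T1 T2 k s (i.val + 1) = s i := by
  have hik := i.isLt
  unfold extSeq
  rw [dif_neg (by omega), dif_pos (by omega)]
  congr

theorem stmt11 (T1 T2 : ℝ) (h : T1 < T2) (k : ℕ) (hk : 1 ≤ k)
    (μ : Fin k → ℝ)
    (hμ : ∀ i ≤ k, extSeq T1 T2 k μ i < extSeq T1 T2 k μ (i + 1)) :
    ∀ s ∈ Sk T1 T2 k, ∀ a ∈ Set.Icc (0 : ℝ) 1,
      (fun i => μ i + a * (s i - μ i)) ∈ Sk T1 T2 k ∧
      DcGen T1 T2 k μ s ≤ DcGen T1 T2 k μ (fun i => μ i + a * (s i - μ i)) := by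
  intro s hs a ha
  obtain ⟨ha0, ha1⟩ := ha
  -- monotone chain for μ's extended sequence
  have key : ∀ j, j ≤ k + 1 → ∀ i ≤ j, extSeq T1 T2 k μ i ≤ extSeq T1 T2 k μ j := by
    intro j
    induction j with
    | zero => intro _ i hi; interval_cases i; exact le_refl _
    | succ n ih =>
      intro hn i hi
      rcases Nat.lt_or_ge i (n + 1) with hi' | hi'
      · exact le_trans (ih (by omega) i (by omega)) (hμ n (by omega)).le
      · have hieq : i = n + 1 := by omega
        subst hieq; exact le_refl _
  have hμSk : μ ∈ Sk T1 T2 k := by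
    refine ⟨?_, ?_, ?_⟩
    · intro i j hij
      rw [← extSeq_val T1 T2 k μ i, ← extSeq_val T1 T2 k μ j]
      exact key (j.val + 1) (by omega) (i.val + 1) (by omega)
    · intro i
      have hkey := key (i.val + 1) (by omega) 0 (by omega)
      rwa [extSeq_zero, extSeq_val] at hkey
    · intro i
      have hkey := key (k + 1) (by omega) (i.val + 1) (by omega)
      rwa [extSeq_last, extSeq_val] at hkey
  obtain ⟨hμmono, hμl, hμu⟩ := hμSk
  obtain ⟨hsmono, hsl, hsu⟩ := hs
  have hmem : (fun i => μ i + a * (s i - μ i)) ∈ Sk T1 T2 k := by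
    refine ⟨?_, ?_, ?_⟩
    · intro i j hij
      have h1 := hμmono hij
      have h2 := hsmono hij
      simp only
      nlinarith
    · intro i; have := hμl i; have := hsl i; simp only; nlinarith
    · intro i; have := hμu i; have := hsu i; simp only; nlinarith
  refine ⟨hmem, ?_⟩
  -- abbreviations
  set E := extSeq T1 T2 k with hE
  set m : ℕ → ℝ := fun i => E μ (i + 1) - E μ i with hm
  set d : ℕ → ℝ := fun i => E s (i + 1) - E s i with hd
  set w : ℕ → ℝ := fun i => m i / (T2 - T1) with hw
  set r : ℕ → ℝ := fun i => d i / m i with hr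
  have hT : (0:ℝ) < T2 - T1 := by linarith
  have hmpos : ∀ i ∈ Finset.range (k + 1), 0 < m i := fun i hi =>
    sub_pos.mpr (hμ i (by simpa using Nat.lt_succ_iff.mp (Finset.mem_range.mp hi)))
  have hdnn : ∀ i ∈ Finset.range (k + 1), 0 ≤ d i := fun i _ =>
    sub_nonneg.mpr (extSeq_step T1 T2 h.le k s ⟨hsmono, hsl, hsu⟩ i)
  have hwpos : ∀ i ∈ Finset.range (k + 1), 0 < w i := fun i hi =>
    div_pos (hmpos i hi) hT
  have hrnn : ∀ i ∈ Finset.range (k + 1), 0 ≤ r i := fun i hi =>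
    div_nonneg (hdnn i hi) (hmpos i hi).le
  have hsum_m : ∑ i ∈ Finset.range (k + 1), m i = T2 - T1 := by
    rw [hm]
    rw [Finset.sum_range_sub (fun i => E μ i)]
    rw [hE, extSeq_zero, extSeq_last]
  have hsum_d : ∑ i ∈ Finset.range (k + 1), d i = T2 - T1 := by
    rw [hd]
    rw [Finset.sum_range_sub (fun i => E s i)]
    rw [hE, extSeq_zero, extSeq_last]
  have hsum_w : ∑ i ∈ Finset.range (k + 1), w i = 1 := by
    rw [hw]
    rw [← Finset.sum_div, hsum_m, div_self hT.ne']
  have hsum_wr : ∑ i ∈ Finset.range (k + 1), w i * r i = 1 := by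
    have : ∀ i ∈ Finset.range (k + 1), w i * r i = d i / (T2 - T1) := by
      intro i hi
      have hne := (hmpos i hi).ne'
      rw [hw, hr]
      field_simp
    rw [Finset.sum_congr rfl this, ← Finset.sum_div, hsum_d, div_self hT.ne']
  -- DcGen s = G where G = ∏ r i ^ w i
  have hDs : DcGen T1 T2 k μ s = ∏ i ∈ Finset.range (k + 1), r i ^ w i := rfl
  -- DcGen s' = ∏ ((1-a) + a * r i) ^ w i
  have hDs' : DcGen T1 T2 k μ (fun i => μ i + a * (s i - μ i))
      = ∏ i ∈ Finset.range (k + 1), ((1 - a) * 1 + a * r i) ^ w i := by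
    unfold DcGen
    refine Finset.prod_congr rfl fun i hi => ?_
    have hmi := (hmpos i hi).ne'
    congr 1
    rw [extSeq_affine, extSeq_affine]
    rw [hr, hd, hm, hE]
    have hmi' : extSeq T1 T2 k μ (i + 1) - extSeq T1 T2 k μ i ≠ 0 := hmi
    field_simp
    ring
  rw [hDs, hDs']
  -- G ≤ 1
  have hG1 : ∏ i ∈ Finset.range (k + 1), r i ^ w i ≤ 1 := by
    calc ∏ i ∈ Finset.range (k + 1), r i ^ w i
        ≤ ∑ i ∈ Finset.range (k + 1), w i * r i :=
          Real.geom_mean_le_arith_mean_weighted _ _ _ (fun i hi => (hwpos i hi).le) hsum_w hrnn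
      _ = 1 := hsum_wr
  have hGnn : 0 ≤ ∏ i ∈ Finset.range (k + 1), r i ^ w i :=
    Finset.prod_nonneg fun i hi => Real.rpow_nonneg (hrnn i hi) _
  -- G ≤ G ^ a
  have hGa : ∏ i ∈ Finset.range (k + 1), r i ^ w i
      ≤ (∏ i ∈ Finset.range (k + 1), r i ^ w i) ^ a := by
    rcases eq_or_lt_of_le hGnn with hG0 | hG0
    · rw [← hG0]
      exact Real.rpow_nonneg (le_refl 0) a
    · calc ∏ i ∈ Finset.range (k + 1), r i ^ w i
          = (∏ i ∈ Finset.range (k + 1), r i ^ w i) ^ (1:ℝ) := (Real.rpow_one _).symm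
        _ ≤ (∏ i ∈ Finset.range (k + 1), r i ^ w i) ^ a :=
          Real.rpow_le_rpow_of_exponent_ge hG0 hG1 ha1
  -- G ^ a ≤ ∏ ((1-a)+a r) ^ w
  have hmain : (∏ i ∈ Finset.range (k + 1), r i ^ w i) ^ a
      ≤ ∏ i ∈ Finset.range (k + 1), ((1 - a) * 1 + a * r i) ^ w i := by
    rw [← Real.finset_prod_rpow _ _ (fun i hi => Real.rpow_nonneg (hrnn i hi) _) a]
    refine Finset.prod_le_prod (fun i hi => Real.rpow_nonneg (Real.rpow_nonneg (hrnn i hi) _) _)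
      (fun i hi => ?_)
    rw [← Real.rpow_mul (hrnn i hi), mul_comm (w i) a, Real.rpow_mul (hrnn i hi)]
    refine Real.rpow_le_rpow (Real.rpow_nonneg (hrnn i hi) a) ?_ (hwpos i hi).le
    have h2 := Real.geom_mean_le_arith_mean2_weighted (by linarith : (0:ℝ) ≤ 1 - a) ha0
      zero_le_one (hrnn i hi) (by ring)
    rwa [Real.one_rpow, one_mul] at h2
  exact le_trans hGa hmain
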